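/- If the system is globally solvable at the Fourier coefficient level, then for every ε > 0 there exists C > 0 such that ‖σ(τ,j)‖ ≥ C·exp(−ε·w(τ,j)) for all (τ,j) ∈ ℤ^m×ℕ with ‖σ(τ,j)‖ ≠ 0. -/

import Mathlib

open Real

/-- Euclidean norm of an integer vector `τ ∈ ℤ^m`. -/
noncomputable def eNormZ {m : ℕ} (τ : Fin m → ℤ) : ℝ :=
  Real.sqrt (∑ i, ((τ i : ℝ)) ^ 2)

/-- The weight `w(τ,j) = ‖τ‖^(1/σ) + j^(1/(2nμ))`. -/
noncomputable def wgt (m n : ℕ) (σ μ : ℝ) (τ : Fin m → ℤ) (j : ℕ) : ℝ :=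
  eNormZ τ ^ (1 / σ) + (j : ℝ) ^ (1 / (2 * n * μ))

/-- GS-decay: `|a(τ,j)| ≤ C exp(-ε w(τ,j))` for some `C, ε > 0`. -/
def GSDecay (m n : ℕ) (σ μ : ℝ) (a : (Fin m → ℤ) → ℕ → ℂ) : Prop :=
  ∃ C > 0, ∃ ε > 0, ∀ τ j, ‖a τ j‖ ≤ C * Real.exp (-ε * wgt m n σ μ τ j)

/-- GS-growth: for all `ε > 0` there is `C > 0` with `|a(τ,j)| ≤ C exp(ε w(τ,j))`. -/
def GSGrowth (m n : ℕ) (σ μ : ℝ) (a : (Fin m → ℤ) → ℕ → ℂ) : Prop :=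
  ∀ ε > 0, ∃ C > 0, ∀ τ j, ‖a τ j‖ ≤ C * Real.exp (ε * wgt m n σ μ τ j)

/-- Symbol of the operator `L_r = Q_r(D_t) + d_r P(x,D_x)`: `σ_r(τ,j) = Q_r(τ) + d_r λ_j`. -/
noncomputable def symb {m ℓ : ℕ} (Q : Fin ℓ → MvPolynomial (Fin m) ℂ)
    (d : Fin ℓ → ℂ) (lam : ℕ → ℝ) (r : Fin ℓ) (τ : Fin m → ℤ) (j : ℕ) : ℂ :=
  MvPolynomial.eval (fun i => ((τ i : ℂ))) (Q r) + d r * (lam j : ℂ)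

/-- `‖σ(τ,j)‖ = max_{1 ≤ r ≤ ℓ} |σ_r(τ,j)|`. -/
noncomputable def symbNorm {m ℓ : ℕ} (Q : Fin ℓ → MvPolynomial (Fin m) ℂ)
    (d : Fin ℓ → ℂ) (lam : ℕ → ℝ) (τ : Fin m → ℤ) (j : ℕ) : ℝ :=
  ⨆ r : Fin ℓ, ‖symb Q d lam r τ j‖

/-- The Diophantine condition (DC). -/
def DioCond (m n ℓ : ℕ) (σ μ : ℝ) (Q : Fin ℓ → MvPolynomial (Fin m) ℂ)
    (d : Fin ℓ → ℂ) (lam : ℕ → ℝ) : Prop :=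
  ∀ ε > 0, ∃ C > 0, ∀ τ j, symbNorm Q d lam τ j ≠ 0 →
    symbNorm Q d lam τ j ≥ C * Real.exp (-ε * wgt m n σ μ τ j)

/-- Global hypoellipticity at the Fourier coefficient level. -/
def GloballyHypoelliptic (m n ℓ : ℕ) (σ μ : ℝ) (Q : Fin ℓ → MvPolynomial (Fin m) ℂ)
    (d : Fin ℓ → ℂ) (lam : ℕ → ℝ) : Prop :=
  ∀ u : (Fin m → ℤ) → ℕ → ℂ, GSGrowth m n σ μ u →
    (∀ r : Fin ℓ, GSDecay m n σ μ (fun τ j => symb Q d lam r τ j * u τ j)) →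
    GSDecay m n σ μ u

/-- Admissible families (compatibility conditions). -/
def Admissible {m ℓ : ℕ} (Q : Fin ℓ → MvPolynomial (Fin m) ℂ) (d : Fin ℓ → ℂ)
    (lam : ℕ → ℝ) (f : Fin ℓ → (Fin m → ℤ) → ℕ → ℂ) : Prop :=
  (∀ r s τ j, symb Q d lam r τ j * f s τ j = symb Q d lam s τ j * f r τ j) ∧
  (∀ r τ j, symb Q d lam r τ j = 0 → f r τ j = 0)

/-- Global solvability at the Fourier coefficient level. -/
def GloballySolvable (m n ℓ : ℕ) (σ μ : ℝ) (Q : Fin ℓ → MvPolynomial (Fin m) ℂ)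
    (d : Fin ℓ → ℂ) (lam : ℕ → ℝ) : Prop :=
  ∀ f : Fin ℓ → (Fin m → ℤ) → ℕ → ℂ, Admissible Q d lam f →
    (∀ r, GSGrowth m n σ μ (f r)) →
    ∃ u : (Fin m → ℤ) → ℕ → ℂ, GSGrowth m n σ μ u ∧
      ∀ r τ j, symb Q d lam r τ j * u τ j = f r τ j

/-- global solvability implies the Diophantine condition (DC). -/
theorem statement5 (m n ℓ : ℕ) (hm : 1 ≤ m) (hn : 1 ≤ n) (hℓ : 1 ≤ ℓ)
    (σ μ : ℝ) (hσ : 1 ≤ σ) (hμ : 1 / 2 ≤ μ)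
    (Q : Fin ℓ → MvPolynomial (Fin m) ℂ) (d : Fin ℓ → ℂ) (lam : ℕ → ℝ)
    (hGS : GloballySolvable m n ℓ σ μ Q d lam) :
    ∀ ε > 0, ∃ C > 0, ∀ τ j, symbNorm Q d lam τ j ≠ 0 →
      symbNorm Q d lam τ j ≥ C * Real.exp (-ε * wgt m n σ μ τ j) := by
  intro ε hε
  haveI : Nonempty (Fin ℓ) := ⟨⟨0, hℓ⟩⟩
  have hw : ∀ τ j, 0 ≤ wgt m n σ μ τ j := by
    intro τ j
    exact add_nonneg (Real.rpow_nonneg (Real.sqrt_nonneg _) _)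
      (Real.rpow_nonneg (Nat.cast_nonneg _) _)
  have hbdd : ∀ τ j, BddAbove (Set.range fun r => ‖symb Q d lam r τ j‖) :=
    fun τ j => (Set.finite_range _).bddAbove
  have hle : ∀ r τ j, ‖symb Q d lam r τ j‖ ≤ symbNorm Q d lam τ j :=
    fun r τ j => le_ciSup (hbdd τ j) r
  have hNnn : ∀ τ j, 0 ≤ symbNorm Q d lam τ j := fun τ j =>
    le_trans (norm_nonneg _) (hle (Classical.arbitrary _) τ j)
  have hmax : ∀ τ j, ∃ r, symbNorm Q d lam τ j = ‖symb Q d lam r τ j‖ := by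
    intro τ j
    obtain ⟨r, hr⟩ := Finite.exists_max (fun r => ‖symb Q d lam r τ j‖)
    exact ⟨r, le_antisymm (ciSup_le hr) (hle r τ j)⟩
  set c : (Fin m → ℤ) → ℕ → ℝ := fun τ j =>
    if symbNorm Q d lam τ j = 0 then 0
    else Real.exp (-(ε/2) * wgt m n σ μ τ j) / symbNorm Q d lam τ j with hc
  set f : Fin ℓ → (Fin m → ℤ) → ℕ → ℂ :=
    fun r τ j => symb Q d lam r τ j * (c τ j : ℂ) with hf
  have hadm : Admissible Q d lam f :=
    ⟨fun r s τ j => by simp only [hf]; ring, fun r τ j h => by simp [hf, h]⟩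
  have hcnn : ∀ τ j, 0 ≤ c τ j := by
    intro τ j
    simp only [hc]
    split_ifs with h
    · exact le_rfl
    · exact div_nonneg (Real.exp_nonneg _) (hNnn τ j)
  have hfb : ∀ r τ j, ‖f r τ j‖ ≤ 1 := by
    intro r τ j
    simp only [hf, norm_mul, Complex.norm_real, Real.norm_eq_abs, abs_of_nonneg (hcnn τ j)]
    by_cases h : symbNorm Q d lam τ j = 0
    · simp [hc, h]
    · have hN : 0 < symbNorm Q d lam τ j := lt_of_le_of_ne (hNnn τ j) (Ne.symm h)
      have h1 : c τ j = Real.exp (-(ε/2) * wgt m n σ μ τ j) / symbNorm Q d lam τ j := by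
        simp [hc, h]
      rw [h1]
      have h2 : ‖symb Q d lam r τ j‖ *
          (Real.exp (-(ε/2) * wgt m n σ μ τ j) / symbNorm Q d lam τ j)
          ≤ symbNorm Q d lam τ j *
          (Real.exp (-(ε/2) * wgt m n σ μ τ j) / symbNorm Q d lam τ j) := by
        apply mul_le_mul_of_nonneg_right (hle r τ j)
        exact div_nonneg (Real.exp_nonneg _) (hNnn τ j)
      have h3 : symbNorm Q d lam τ j *
          (Real.exp (-(ε/2) * wgt m n σ μ τ j) / symbNorm Q d lam τ j)
          = Real.exp (-(ε/2) * wgt m n σ μ τ j) := by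
        field_simp
      rw [h3] at h2
      refine h2.trans (Real.exp_le_one_iff.mpr ?_)
      have := hw τ j
      nlinarith
  have hgrowth : ∀ r, GSGrowth m n σ μ (f r) := by
    intro r ε' hε'
    refine ⟨1, one_pos, fun τ j => ?_⟩
    have : (1:ℝ) ≤ Real.exp (ε' * wgt m n σ μ τ j) := by
      apply Real.one_le_exp
      exact mul_nonneg hε'.le (hw τ j)
    calc ‖f r τ j‖ ≤ 1 := hfb r τ j
      _ ≤ 1 * Real.exp (ε' * wgt m n σ μ τ j) := by rw [one_mul]; exact this
  obtain ⟨u, hu, hsol⟩ := hGS f hadm hgrowth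
  obtain ⟨C', hC', hub⟩ := hu (ε/2) (by linarith)
  refine ⟨1/C', by positivity, fun τ j hN0 => ?_⟩
  have hN : 0 < symbNorm Q d lam τ j := lt_of_le_of_ne (hNnn τ j) (Ne.symm hN0)
  obtain ⟨r, hr⟩ := hmax τ j
  have hσr : symb Q d lam r τ j ≠ 0 := by
    intro h
    rw [h] at hr
    simp at hr
    exact hN0 hr
  have hueq : u τ j = (c τ j : ℂ) :=
    mul_left_cancel₀ hσr (hsol r τ j)
  have habs : ‖u τ j‖ = c τ j := by
    rw [hueq, Complex.norm_real, Real.norm_eq_abs, abs_of_nonneg (hcnn τ j)]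
  have hcval : c τ j = Real.exp (-(ε/2) * wgt m n σ μ τ j) / symbNorm Q d lam τ j := by
    simp [hc, hN0]
  have key : Real.exp (-(ε/2) * wgt m n σ μ τ j) / symbNorm Q d lam τ j
      ≤ C' * Real.exp (ε/2 * wgt m n σ μ τ j) := by
    rw [← hcval, ← habs]; exact hub τ j
  rw [div_le_iff₀ hN] at key
  have hsplit : Real.exp (-ε * wgt m n σ μ τ j)
      = Real.exp (-(ε/2) * wgt m n σ μ τ j) * Real.exp (-(ε/2) * wgt m n σ μ τ j) := by
    rw [← Real.exp_add]; ring_nf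
  have hinv : Real.exp (-(ε/2) * wgt m n σ μ τ j) * Real.exp (ε/2 * wgt m n σ μ τ j) = 1 := by
    rw [← Real.exp_add]; ring_nf; exact Real.exp_zero
  have hexp2 : 0 < Real.exp (ε/2 * wgt m n σ μ τ j) := Real.exp_pos _
  have hexp1 : 0 < Real.exp (-(ε/2) * wgt m n σ μ τ j) := Real.exp_pos _
  rw [ge_iff_le, div_mul_eq_mul_div, div_le_iff₀ hC', hsplit]
  nlinarith [mul_le_mul_of_nonneg_left key hexp1.le]
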